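/- Let f : (ℕ → Ordinal) → Ordinal be weakly monotone and invariant under prepending 0, i.e., f (0⌢a) = f a for every sequence a, where (0⌢a) 0 = 0 and (0⌢a) (i+1) = a i. Then for every nondecreasing sequence a : ℕ → Ordinal (a i ≤ a j whenever i ≤ j) and every ordinal γ ≤ a 0, f (Function.update a 0 γ) = f a; in particular, f is not strictly monotone in the first argument at any nondecreasing sequence with a 0 > 0. -/
import Mathlib

/-- If `f` is weakly monotone and invariant under prepending `0` to a sequence, then on any
nondecreasing sequence `a`, decreasing the first entry to any `γ ≤ a 0` does not change
the value of `f`; in particular `f` is not strictly monotone in the first argument at any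
nondecreasing sequence with nonzero first entry. -/
theorem not_strictMono_first_of_monotone_and_zero_neutral
    (f : (ℕ → Ordinal) → Ordinal)
    (hmono : ∀ a b : ℕ → Ordinal, (∀ i, a i ≤ b i) → f a ≤ f b)
    (hzero : ∀ a : ℕ → Ordinal,
      f (fun n => match n with | 0 => 0 | (i + 1) => a i) = f a) :
    (∀ a : ℕ → Ordinal, Monotone a → ∀ γ : Ordinal, γ ≤ a 0 →
        f (Function.update a 0 γ) = f a) ∧
      ∀ a : ℕ → Ordinal, Monotone a → 0 < a 0 → ∀ γ : Ordinal, γ < a 0 →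
        ¬ f (Function.update a 0 γ) < f a := by
  have key : ∀ a : ℕ → Ordinal, Monotone a → ∀ γ : Ordinal, γ ≤ a 0 →
      f (Function.update a 0 γ) = f a := by
    intro a ha γ hγ
    apply le_antisymm
    · apply hmono
      intro i
      cases i with
      | zero => simpa using hγ
      | succ n => simp [Function.update]
    · calc f a = f (fun n => match n with | 0 => 0 | (i + 1) => a i) := (hzero a).symm
        _ ≤ f (Function.update a 0 γ) := by
            apply hmono
            intro i
            cases i with
            | zero => simp
            | succ n =>
              simp only [Function.update]
              simp
              exact ha (Nat.le_succ n)
  exact ⟨key, fun a ha h0 γ hγ h => absurd (key a ha γ hγ.le) h.ne⟩
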